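/- For a non-negative monotone submodular function f on subsets of a finite ground set V, if {S_i} are the sets produced by greedy selection (S_0 = ∅ and S_i = S_{i-1} ∪ {e_i} where e_i maximizes the marginal gain f(S_{i-1} ∪ {e}) − f(S_{i-1})), then for all positive integers ℓ and k, f(S_ℓ) ≥ (1 − e^{−ℓ/k}) · max{f(S) : |S| ≤ k}. -/

import Mathlib

lemma greedy_aux_sum {V : Type*} [DecidableEq V] (f : Finset V → ℝ)
    (hsub : ∀ A B : Finset V, A ⊆ B → ∀ e ∉ B,
      f (insert e B) - f B ≤ f (insert e A) - f A) (A : Finset V) :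
    ∀ B : Finset V, f (A ∪ B) - f A ≤ ∑ e ∈ B \ A, (f (insert e A) - f A) := by
  intro B
  induction B using Finset.induction_on with
  | empty => simp
  | insert _ _ hb ih =>
    rename_i b B
    by_cases hbA : b ∈ A
    · have h1 : A ∪ insert b B = A ∪ B := by
        rw [Finset.union_insert, Finset.insert_eq_self.mpr (Finset.mem_union_left B hbA)]
      have h2 : insert b B \ A = B \ A := by
        ext x
        by_cases hx : x = b
        · subst hx; simp [hbA]
        · simp [hx]
      rw [h1, h2]; exact ih
    · have h1 : A ∪ insert b B = insert b (A ∪ B) := Finset.union_insert b A B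
      have h2 : insert b B \ A = insert b (B \ A) := by
        ext x
        by_cases hx : x = b
        · subst hx; simp [hbA]
        · simp [hx]
      have hbBA : b ∉ B \ A := by simp [hb]
      rw [h1, h2, Finset.sum_insert hbBA]
      have hsubAB : A ⊆ A ∪ B := Finset.subset_union_left
      have hbAB : b ∉ A ∪ B := by simp [hbA, hb]
      have := hsub A (A ∪ B) hsubAB b hbAB
      linarith

/-- Nemhauser–Wolsey–Fisher: greedy guarantee `f(S_ℓ) ≥ (1 - e^{-ℓ/k})·max{f(S) : |S| ≤ k}`. -/
theorem greedy_submodular_bound {V : Type*} [Fintype V] [DecidableEq V]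
    (f : Finset V → ℝ)
    (hnn : ∀ A : Finset V, 0 ≤ f A)
    (hmono : ∀ A B : Finset V, A ⊆ B → f A ≤ f B)
    (hsub : ∀ A B : Finset V, A ⊆ B → ∀ e ∉ B,
      f (insert e B) - f B ≤ f (insert e A) - f A)
    (S : ℕ → Finset V)
    (hS0 : S 0 = ∅)
    (hgreedy : ∀ i, ∃ e : V, S (i + 1) = insert e (S i) ∧
      ∀ e' : V, f (insert e' (S i)) - f (S i) ≤ f (insert e (S i)) - f (S i))
    (ℓ k : ℕ) (hℓ : 0 < ℓ) (hk : 0 < k) :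
    ∀ T : Finset V, T.card ≤ k →
      (1 - Real.exp (-(ℓ : ℝ) / k)) * f T ≤ f (S ℓ) := by
  intro T hT
  have hk1 : (1 : ℝ) ≤ (k : ℝ) := by exact_mod_cast hk
  have hkpos : (0 : ℝ) < (k : ℝ) := by linarith
  -- max marginal is nonneg and key step inequality
  have hkey : ∀ i, f T - f (S i) ≤ (k : ℝ) * (f (S (i+1)) - f (S i)) := by
    intro i
    obtain ⟨e, he1, he2⟩ := hgreedy i
    have hδnn : 0 ≤ f (S (i+1)) - f (S i) := by
      have := he2 e
      have hm : f (S i) ≤ f (insert e (S i)) :=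
        hmono _ _ (Finset.subset_insert _ _)
      rw [he1]; linarith
    have h1 : f T ≤ f (S i ∪ T) := hmono _ _ Finset.subset_union_right
    have h2 := greedy_aux_sum f hsub (S i) T
    have h3 : ∑ x ∈ T \ S i, (f (insert x (S i)) - f (S i))
        ≤ ∑ _x ∈ T \ S i, (f (S (i+1)) - f (S i)) := by
      apply Finset.sum_le_sum
      intro x _
      have := he2 x
      rw [he1]; linarith
    have h4 : ∑ _x ∈ T \ S i, (f (S (i+1)) - f (S i))
        = ((T \ S i).card : ℝ) * (f (S (i+1)) - f (S i)) := by
      rw [Finset.sum_const, nsmul_eq_mul]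
    have hcard : ((T \ S i).card : ℝ) ≤ (k : ℝ) := by
      have : (T \ S i).card ≤ T.card := Finset.card_le_card (Finset.sdiff_subset)
      exact_mod_cast le_trans this hT
    have h5 : ((T \ S i).card : ℝ) * (f (S (i+1)) - f (S i))
        ≤ (k : ℝ) * (f (S (i+1)) - f (S i)) :=
      mul_le_mul_of_nonneg_right hcard hδnn
    linarith
  -- geometric decay
  have hc0 : (0:ℝ) ≤ 1 - 1 / (k:ℝ) := by
    have : 1 / (k:ℝ) ≤ 1 := by
      rw [div_le_one hkpos]; exact hk1
    linarith
  have hgeo : ∀ i, f T - f (S i) ≤ (1 - 1/(k:ℝ))^i * f T := by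
    intro i
    induction i with
    | zero => simp [hS0]; linarith [hnn (∅ : Finset V)]
    | succ n ih =>
      have hstep : f T - f (S (n+1)) ≤ (1 - 1/(k:ℝ)) * (f T - f (S n)) := by
        have hkn := hkey n
        rw [show (1 - 1/(k:ℝ)) = ((k:ℝ)-1)/k by field_simp, div_mul_eq_mul_div,
          le_div_iff₀ hkpos]
        nlinarith
      calc f T - f (S (n+1)) ≤ (1 - 1/(k:ℝ)) * (f T - f (S n)) := hstep
        _ ≤ (1 - 1/(k:ℝ)) * ((1 - 1/(k:ℝ))^n * f T) :=
            mul_le_mul_of_nonneg_left ih hc0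
        _ = (1 - 1/(k:ℝ))^(n+1) * f T := by ring
  -- compare with exponential
  have hexp1 : (1 - 1/(k:ℝ)) ≤ Real.exp (-(1:ℝ)/k) :=
    calc 1 - 1/(k:ℝ) = (-(1:ℝ)/k) + 1 := by ring
      _ ≤ Real.exp (-(1:ℝ)/k) := Real.add_one_le_exp _
  have hexpℓ : (1 - 1/(k:ℝ))^ℓ ≤ Real.exp (-(ℓ:ℝ)/k) := by
    calc (1 - 1/(k:ℝ))^ℓ ≤ (Real.exp (-(1:ℝ)/k))^ℓ :=
          pow_le_pow_left₀ hc0 hexp1 ℓ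
      _ = Real.exp ((ℓ:ℕ) * (-(1:ℝ)/k)) := by rw [← Real.exp_nat_mul]
      _ = Real.exp (-(ℓ:ℝ)/k) := by congr 1; ring
  have hfin : (1 - 1/(k:ℝ))^ℓ * f T ≤ Real.exp (-(ℓ:ℝ)/k) * f T :=
    mul_le_mul_of_nonneg_right hexpℓ (hnn T)
  have := hgeo ℓ
  nlinarith
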